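/- Let ι be a finite type, and for each i ∈ ι let m i and k i be nonempty finite types with decidable equality; let τ : ∀ i, Matrix (k i) (k i) ℂ be positive definite matrices of trace 1. Set d := card (Σ i, (m i × k i)) and σTr := Matrix.blockDiagonal' (fun i => ((card (k i) : ℝ)/d) • (1 ⊗ₖ τ i)). Let ρ be a positive definite matrix of trace 1 on Σ i, (m i × k i), and define ρ_N := Matrix.blockDiagonal' (fun i => R_i ⊗ₖ τ i), where R_i(a,a') := Σ_b ρ(⟨i,(a,b)⟩, ⟨i,(a',b)⟩). Then ρ_N and σTr are positive definite of trace 1, and D(ρ‖ρ_N) = D(ρ‖σTr) − D(ρ_N‖σTr). -/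

import Mathlib

open Matrix Kronecker
open scoped ComplexOrder

/-- matrix logarithm via the continuous functional calculus -/
noncomputable def mlog {n : Type*} [Fintype n] [DecidableEq n] (A : Matrix n n ℂ) :
    Matrix n n ℂ := cfc Real.log A

/-- quantum relative entropy `D(ρ‖σ) = Re Tr[ρ (log ρ − log σ)]` -/
noncomputable def relEnt {n : Type*} [Fintype n] [DecidableEq n]
    (ρ σ : Matrix n n ℂ) : ℝ := (Matrix.trace (ρ * (mlog ρ - mlog σ))).re

section Blocks

variable {ι : Type*} [Fintype ι] [DecidableEq ι]
  {m k : ι → Type*} [∀ i, Fintype (m i)] [∀ i, Fintype (k i)]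
  [∀ i, DecidableEq (m i)] [∀ i, DecidableEq (k i)]

/-- the reference state `σ_Tr` -/
noncomputable def sigmaTr (τ : ∀ i, Matrix (k i) (k i) ℂ) :
    Matrix (Σ i, (m i × k i)) (Σ i, (m i × k i)) ℂ :=
  Matrix.blockDiagonal' fun i =>
    ((Fintype.card (k i) : ℝ) / (Fintype.card (Σ i, (m i × k i)) : ℝ)) •
      ((1 : Matrix (m i) (m i) ℂ) ⊗ₖ τ i)

/-- the decohered state `ρ_N = E_{N*}(ρ)` -/
noncomputable def decohered (τ : ∀ i, Matrix (k i) (k i) ℂ)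
    (ρ : Matrix (Σ i, (m i × k i)) (Σ i, (m i × k i)) ℂ) :
    Matrix (Σ i, (m i × k i)) (Σ i, (m i × k i)) ℂ :=
  Matrix.blockDiagonal' fun i =>
    (Matrix.of fun a a' => ∑ b, ρ ⟨i, (a, b)⟩ ⟨i, (a', b)⟩) ⊗ₖ τ i

end Blocks

namespace RelEntAux

variable {n : Type*} [Fintype n] [DecidableEq n]

lemma contOn {A : Matrix n n ℂ} (f : ℝ → ℝ) : ContinuousOn f (spectrum ℝ A) := by
  rw [continuousOn_iff_continuous_restrict]
  exact continuous_of_discreteTopology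

lemma diag_herm (d : n → ℝ) : (Matrix.diagonal (fun i => (d i : ℂ))).IsHermitian :=
  Matrix.isHermitian_diagonal_of_self_adjoint _ (funext fun i => Complex.conj_ofReal (d i))

lemma mem_spec (d : n → ℝ) (i : n) :
    d i ∈ spectrum ℝ (Matrix.diagonal (fun j => (d j : ℂ))) := by
  rw [← spectrum.algebraMap_mem_iff ℂ, spectrum_diagonal]
  exact ⟨i, by simp⟩

/-- the diagonal star algebra homomorphism -/
noncomputable def diagHom (d : n → ℝ) :
    C(spectrum ℝ (Matrix.diagonal (fun j => (d j : ℂ))), ℝ) →⋆ₐ[ℝ] Matrix n n ℂ where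
  toFun g := Matrix.diagonal fun i => (g ⟨d i, mem_spec d i⟩ : ℂ)
  map_one' := by simp only [ContinuousMap.one_apply, Complex.ofReal_one]; exact Matrix.diagonal_one
  map_mul' g h := by
    simp only [ContinuousMap.mul_apply, Complex.ofReal_mul, Matrix.diagonal_mul_diagonal]
  map_zero' := by simp only [ContinuousMap.zero_apply, Complex.ofReal_zero]; exact Matrix.diagonal_zero
  map_add' g h := by
    simp only [ContinuousMap.add_apply, Complex.ofReal_add, Matrix.diagonal_add]
  commutes' r := by
    ext i j
    rcases eq_or_ne i j with rfl | h
    · simp [Matrix.algebraMap_eq_diagonal]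
    · simp [Matrix.algebraMap_eq_diagonal, Matrix.diagonal_apply_ne _ h]
  map_star' g := by
    simp only [star_trivial, Matrix.star_eq_conjTranspose]
    exact (diag_herm (fun i => g ⟨d i, mem_spec d i⟩)).eq.symm

lemma cfc_diagonal (d : n → ℝ) (f : ℝ → ℝ) :
    cfc f (Matrix.diagonal (fun i => (d i : ℂ))) = Matrix.diagonal (fun i => (f (d i) : ℂ)) := by
  have hsa : _root_.IsSelfAdjoint (Matrix.diagonal (fun i => (d i : ℂ))) := diag_herm d
  have hcont : Continuous (diagHom d) := by
    show Continuous fun g : C(spectrum ℝ (Matrix.diagonal (fun j => (d j : ℂ))), ℝ) =>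
      Matrix.diagonal fun i => ((g ⟨d i, mem_spec d i⟩ : ℝ) : ℂ)
    refine continuous_matrix fun i j => ?_
    by_cases h : i = j
    · subst h
      simp only [Matrix.diagonal_apply_eq]
      exact Complex.continuous_ofReal.comp (ContinuousEvalConst.continuous_eval_const _)
    · simp only [Matrix.diagonal_apply_ne _ h]
      exact continuous_const
  have hid : (diagHom d) (ContinuousMap.restrict _ (ContinuousMap.id ℝ))
      = Matrix.diagonal (fun i => (d i : ℂ)) := rfl
  have hkey := cfcHom_eq_of_continuous_of_map_id hsa (diagHom d) hcont hid
  rw [cfc_apply f _ hsa (contOn f), hkey]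
  rfl

/-- conjugation by a unitary as a star algebra homomorphism -/
noncomputable def conjHom (U : Matrix n n ℂ) (h2 : U * star U = 1) :
    Matrix n n ℂ →⋆ₐ[ℂ] Matrix n n ℂ where
  toFun x := U * x * star U
  map_one' := by show U * 1 * star U = 1; rw [mul_one, h2]
  map_mul' x y := by
    have h1 : star U * U = 1 := mul_eq_one_comm.mp h2
    simp only [mul_assoc]
    rw [← mul_assoc (star U) U (y * star U), h1, one_mul]
  map_zero' := by simp
  map_add' x y := by
    show U * (x + y) * star U = U * x * star U + U * y * star U; rw [mul_add, add_mul]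
  commutes' c := by
    simp only [Algebra.algebraMap_eq_smul_one, mul_smul_comm, smul_mul_assoc, mul_one, h2]
  map_star' x := by
    simp [Matrix.star_mul, star_star, mul_assoc]

lemma cfc_conj (f : ℝ → ℝ) {U A : Matrix n n ℂ} (h2 : U * star U = 1) (hA : A.IsHermitian) :
    cfc f (U * A * star U) = U * cfc f A * star U := by
  have hsa : _root_.IsSelfAdjoint A := hA
  have hsa2 : _root_.IsSelfAdjoint (U * A * star U) := by
    rw [_root_.IsSelfAdjoint]
    calc star (U * A * star U) = U * (star A * star U) := by
          simp [Matrix.star_mul, star_star, mul_assoc]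
    _ = U * A * star U := by rw [hsa.star_eq, mul_assoc]
  have hcont : Continuous (conjHom U h2) := by
    show Continuous fun x : Matrix n n ℂ => U * x * star U
    exact (continuous_const.matrix_mul continuous_id).matrix_mul continuous_const
  exact (StarAlgHom.map_cfc (conjHom U h2) f A (contOn f) hcont hsa hsa2).symm

lemma cfc_conj_diagonal (f : ℝ → ℝ) {U : Matrix n n ℂ} (h2 : U * star U = 1) (d : n → ℝ) :
    cfc f (U * Matrix.diagonal (fun i => (d i : ℂ)) * star U)
      = U * Matrix.diagonal (fun i => (f (d i) : ℂ)) * star U := by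
  rw [cfc_conj f h2 (diag_herm d), cfc_diagonal]

lemma posDef_conj {U D : Matrix n n ℂ} (h2 : U * star U = 1) (hD : D.PosDef) :
    (U * D * star U).PosDef := by
  refine Matrix.PosDef.of_dotProduct_mulVec_pos ?_ fun x hx => ?_
  · rw [Matrix.IsHermitian]
    calc (U * D * star U)ᴴ = U * (Dᴴ * star U) := by
          simp [Matrix.conjTranspose_mul, Matrix.star_eq_conjTranspose, mul_assoc]
    _ = U * D * star U := by rw [hD.1.eq, mul_assoc, Matrix.star_eq_conjTranspose]
  · have hy : star U *ᵥ x ≠ 0 := by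
      intro h
      apply hx
      have := congrArg (fun v => U *ᵥ v) h
      simpa [Matrix.mulVec_mulVec, h2] using this
    have key : star x ⬝ᵥ ((U * D * star U) *ᵥ x)
        = star (star U *ᵥ x) ⬝ᵥ (D *ᵥ (star U *ᵥ x)) := by
      rw [Matrix.star_mulVec, Matrix.star_eq_conjTranspose, Matrix.conjTranspose_conjTranspose]
      rw [← Matrix.dotProduct_mulVec, Matrix.mulVec_mulVec, Matrix.mulVec_mulVec]
    rw [key]
    exact hD.dotProduct_mulVec_pos hy

lemma mlog_eq_conj {A : Matrix n n ℂ} (hA : A.IsHermitian) :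
    mlog A = (Matrix.IsHermitian.eigenvectorUnitary hA : Matrix n n ℂ)
      * Matrix.diagonal (fun i => (Real.log (hA.eigenvalues i) : ℂ))
      * star (Matrix.IsHermitian.eigenvectorUnitary hA : Matrix n n ℂ) := by
  have h2 := Matrix.mem_unitaryGroup_iff.mp (Matrix.IsHermitian.eigenvectorUnitary hA).2
  conv_lhs => rw [mlog, hA.spectral_theorem]
  exact cfc_conj_diagonal Real.log h2 hA.eigenvalues

lemma real_smul_one_eq_diagonal (c : ℝ) :
    c • (1 : Matrix n n ℂ) = Matrix.diagonal (fun _ => (c : ℂ)) := by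
  ext i j
  rcases eq_or_ne i j with rfl | h
  · simp [Complex.real_smul]
  · simp [Matrix.one_apply_ne h, Matrix.diagonal_apply_ne _ h]

lemma mlog_real_smul_one (c : ℝ) :
    mlog (c • (1 : Matrix n n ℂ)) = Matrix.diagonal (fun _ : n => (Real.log c : ℂ)) := by
  rw [real_smul_one_eq_diagonal]
  exact cfc_diagonal (fun _ => c) Real.log

lemma posDef_real_smul_one {c : ℝ} (hc : 0 < c) : (c • (1 : Matrix n n ℂ)).PosDef := by
  rw [real_smul_one_eq_diagonal]
  exact Matrix.posDef_diagonal_iff.mpr fun _ => Complex.zero_lt_real.mpr hc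

section Kron
variable {p q : Type*} [Fintype p] [Fintype q] [DecidableEq p] [DecidableEq q]

lemma kron_conjTranspose (A : Matrix p p ℂ) (B : Matrix q q ℂ) :
    (A ⊗ₖ B)ᴴ = Aᴴ ⊗ₖ Bᴴ := by
  ext ⟨ia, ib⟩ ⟨ja, jb⟩
  simp [Matrix.conjTranspose_apply, Matrix.kroneckerMap_apply, star_mul']

lemma kron_star (A : Matrix p p ℂ) (B : Matrix q q ℂ) :
    star (A ⊗ₖ B) = star A ⊗ₖ star B := by
  simp only [Matrix.star_eq_conjTranspose]; exact kron_conjTranspose A B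

lemma sub_kron (A B : Matrix p p ℂ) (C : Matrix q q ℂ) :
    (A - B) ⊗ₖ C = A ⊗ₖ C - B ⊗ₖ C := by
  ext ⟨ia, ib⟩ ⟨ja, jb⟩
  simp [Matrix.kroneckerMap_apply, sub_mul]

lemma posDef_kronecker {A : Matrix p p ℂ} {B : Matrix q q ℂ} (hA : A.PosDef) (hB : B.PosDef) :
    (A ⊗ₖ B).PosDef := by
  set U : Matrix p p ℂ := (Matrix.IsHermitian.eigenvectorUnitary hA.1 : Matrix p p ℂ)
  set V : Matrix q q ℂ := (Matrix.IsHermitian.eigenvectorUnitary hB.1 : Matrix q q ℂ)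
  have hU : U * star U = 1 :=
    Matrix.mem_unitaryGroup_iff.mp (Matrix.IsHermitian.eigenvectorUnitary hA.1).2
  have hV : V * star V = 1 :=
    Matrix.mem_unitaryGroup_iff.mp (Matrix.IsHermitian.eigenvectorUnitary hB.1).2
  have hW : (U ⊗ₖ V) * star (U ⊗ₖ V) = 1 := by
    rw [kron_star, ← Matrix.mul_kronecker_mul, hU, hV, Matrix.one_kronecker_one]
  have decomp : A ⊗ₖ B = (U ⊗ₖ V)
      * Matrix.diagonal (fun r : p × q => ((hA.1.eigenvalues r.1 * hB.1.eigenvalues r.2 : ℝ) : ℂ))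
      * star (U ⊗ₖ V) := by
    conv_lhs => rw [hA.1.spectral_theorem, hB.1.spectral_theorem, Unitary.conjStarAlgAut_apply,
      Unitary.conjStarAlgAut_apply]
    rw [Matrix.mul_kronecker_mul, Matrix.mul_kronecker_mul, kron_star,
      Matrix.diagonal_kronecker_diagonal]
    congr 2
    funext r
    push_cast
    rfl
  rw [decomp]
  refine posDef_conj hW (Matrix.posDef_diagonal_iff.mpr fun r => ?_)
  exact Complex.zero_lt_real.mpr (mul_pos (hA.eigenvalues_pos r.1) (hB.eigenvalues_pos r.2))

lemma mlog_kronecker {A : Matrix p p ℂ} {B : Matrix q q ℂ} (hA : A.PosDef) (hB : B.PosDef) :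
    mlog (A ⊗ₖ B) = mlog A ⊗ₖ (1 : Matrix q q ℂ) + (1 : Matrix p p ℂ) ⊗ₖ mlog B := by
  set U : Matrix p p ℂ := (Matrix.IsHermitian.eigenvectorUnitary hA.1 : Matrix p p ℂ)
  set V : Matrix q q ℂ := (Matrix.IsHermitian.eigenvectorUnitary hB.1 : Matrix q q ℂ)
  have hU : U * star U = 1 :=
    Matrix.mem_unitaryGroup_iff.mp (Matrix.IsHermitian.eigenvectorUnitary hA.1).2
  have hV : V * star V = 1 :=
    Matrix.mem_unitaryGroup_iff.mp (Matrix.IsHermitian.eigenvectorUnitary hB.1).2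
  have hW : (U ⊗ₖ V) * star (U ⊗ₖ V) = 1 := by
    rw [kron_star, ← Matrix.mul_kronecker_mul, hU, hV, Matrix.one_kronecker_one]
  have decomp : A ⊗ₖ B = (U ⊗ₖ V)
      * Matrix.diagonal (fun r : p × q => ((hA.1.eigenvalues r.1 * hB.1.eigenvalues r.2 : ℝ) : ℂ))
      * star (U ⊗ₖ V) := by
    conv_lhs => rw [hA.1.spectral_theorem, hB.1.spectral_theorem, Unitary.conjStarAlgAut_apply,
      Unitary.conjStarAlgAut_apply]
    rw [Matrix.mul_kronecker_mul, Matrix.mul_kronecker_mul, kron_star,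
      Matrix.diagonal_kronecker_diagonal]
    congr 2
    funext r
    push_cast
    rfl
  rw [mlog, decomp, cfc_conj_diagonal Real.log hW]
  have hsplit : Matrix.diagonal
        (fun r : p × q => ((Real.log (hA.1.eigenvalues r.1 * hB.1.eigenvalues r.2) : ℝ) : ℂ))
      = Matrix.diagonal (fun a => (Real.log (hA.1.eigenvalues a) : ℂ)) ⊗ₖ (1 : Matrix q q ℂ)
        + (1 : Matrix p p ℂ) ⊗ₖ Matrix.diagonal (fun b => (Real.log (hB.1.eigenvalues b) : ℂ)) := by
    rw [← Matrix.diagonal_one (n := q), ← Matrix.diagonal_one (n := p),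
      Matrix.diagonal_kronecker_diagonal, Matrix.diagonal_kronecker_diagonal,
      Matrix.diagonal_add]
    refine congrArg Matrix.diagonal (funext fun r => ?_)
    rw [Real.log_mul (ne_of_gt (hA.eigenvalues_pos r.1)) (ne_of_gt (hB.eigenvalues_pos r.2))]
    push_cast
    ring
  rw [hsplit, mul_add, add_mul]
  congr 1
  · rw [kron_star, ← Matrix.mul_kronecker_mul, ← Matrix.mul_kronecker_mul, mul_one, hV,
      mlog_eq_conj hA.1]
  · rw [kron_star, ← Matrix.mul_kronecker_mul, ← Matrix.mul_kronecker_mul, mul_one, hU,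
      mlog_eq_conj hB.1]

end Kron

section Blk
variable {ι : Type*} [Fintype ι] [DecidableEq ι] {s : ι → Type*}
  [∀ i, Fintype (s i)] [∀ i, DecidableEq (s i)]

lemma blk_star (M : ∀ i, Matrix (s i) (s i) ℂ) :
    star (Matrix.blockDiagonal' M) = Matrix.blockDiagonal' (fun i => star (M i)) := by
  simp only [Matrix.star_eq_conjTranspose]
  exact Matrix.blockDiagonal'_conjTranspose M

variable {A : ∀ i, Matrix (s i) (s i) ℂ}

lemma blk_unitary (hA : ∀ i, (A i).IsHermitian) :
    Matrix.blockDiagonal'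
        (fun i => (Matrix.IsHermitian.eigenvectorUnitary (hA i) : Matrix (s i) (s i) ℂ))
      * star (Matrix.blockDiagonal'
        (fun i => (Matrix.IsHermitian.eigenvectorUnitary (hA i) : Matrix (s i) (s i) ℂ))) = 1 := by
  have h1 : (fun i => (Matrix.IsHermitian.eigenvectorUnitary (hA i) : Matrix (s i) (s i) ℂ)
        * star (Matrix.IsHermitian.eigenvectorUnitary (hA i) : Matrix (s i) (s i) ℂ))
      = fun i => (1 : Matrix (s i) (s i) ℂ) :=
    funext fun i => Matrix.mem_unitaryGroup_iff.mp (Matrix.IsHermitian.eigenvectorUnitary (hA i)).2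
  rw [blk_star, ← Matrix.blockDiagonal'_mul, h1]
  exact Matrix.blockDiagonal'_one

lemma blk_decomp (hA : ∀ i, (A i).IsHermitian) :
    Matrix.blockDiagonal' A
      = Matrix.blockDiagonal'
          (fun i => (Matrix.IsHermitian.eigenvectorUnitary (hA i) : Matrix (s i) (s i) ℂ))
        * Matrix.diagonal (fun pt : Σ i, s i => (((hA pt.1).eigenvalues pt.2 : ℝ) : ℂ))
        * star (Matrix.blockDiagonal'
          (fun i => (Matrix.IsHermitian.eigenvectorUnitary (hA i) : Matrix (s i) (s i) ℂ))) := by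
  have hAeq : A = fun i => (Matrix.IsHermitian.eigenvectorUnitary (hA i) : Matrix (s i) (s i) ℂ)
      * Matrix.diagonal (fun x => (((hA i).eigenvalues x : ℝ) : ℂ))
      * star (Matrix.IsHermitian.eigenvectorUnitary (hA i) : Matrix (s i) (s i) ℂ) :=
    funext fun i => (hA i).spectral_theorem
  conv_lhs => rw [hAeq]
  rw [blk_star, ← Matrix.blockDiagonal'_diagonal (fun i x => (((hA i).eigenvalues x : ℝ) : ℂ)),
    Matrix.blockDiagonal'_mul, Matrix.blockDiagonal'_mul]

lemma posDef_blockDiagonal' (hA : ∀ i, (A i).PosDef) : (Matrix.blockDiagonal' A).PosDef := by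
  rw [blk_decomp (fun i => (hA i).1)]
  exact posDef_conj (blk_unitary _) (Matrix.posDef_diagonal_iff.mpr fun pt =>
    Complex.zero_lt_real.mpr ((hA pt.1).eigenvalues_pos pt.2))

lemma mlog_blockDiagonal' (hA : ∀ i, (A i).IsHermitian) :
    mlog (Matrix.blockDiagonal' A) = Matrix.blockDiagonal' (fun i => mlog (A i)) := by
  rw [mlog, blk_decomp hA, cfc_conj_diagonal Real.log (blk_unitary hA)]
  rw [blk_star,
    ← Matrix.blockDiagonal'_diagonal (fun i x => ((Real.log ((hA i).eigenvalues x) : ℝ) : ℂ)),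
    ← Matrix.blockDiagonal'_mul, ← Matrix.blockDiagonal'_mul]
  exact congrArg _ (funext fun i => (mlog_eq_conj (hA i)).symm)

end Blk

section Main
variable {ι : Type*} [Fintype ι] [DecidableEq ι]
  {m k : ι → Type*} [∀ i, Fintype (m i)] [∀ i, Fintype (k i)]
  [∀ i, DecidableEq (m i)] [∀ i, DecidableEq (k i)]

/-- the partial trace blocks -/
noncomputable def Rmat (ρ : Matrix (Σ i, (m i × k i)) (Σ i, (m i × k i)) ℂ) (i : ι) :
    Matrix (m i) (m i) ℂ :=
  Matrix.of fun a a' => ∑ b, ρ ⟨i, (a, b)⟩ ⟨i, (a', b)⟩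

variable (ρ : Matrix (Σ i, (m i × k i)) (Σ i, (m i × k i)) ℂ)

lemma Rmat_posDef [∀ i, Nonempty (k i)] (hρ : ρ.PosDef) (i : ι) : (Rmat ρ i).PosDef := by
  rw [Matrix.posDef_iff_dotProduct_mulVec]
  constructor
  · ext a a'
    simp only [Matrix.conjTranspose_apply, Rmat, Matrix.of_apply, star_sum]
    exact Finset.sum_congr rfl fun b _ => hρ.1.apply _ _
  · intro x hx
    obtain ⟨a₀, ha₀⟩ := Function.ne_iff.mp hx
    set z : k i → (Σ j, (m j × k j)) → ℂ :=
      fun b q => ∑ a, if q = ⟨i, (a, b)⟩ then x a else 0 with hz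
    have hzval : ∀ (b : k i) (a : m i), z b ⟨i, (a, b)⟩ = x a := by
      intro b a
      rw [hz]
      simp only
      calc (∑ a', if (⟨i, (a, b)⟩ : Σ j, (m j × k j)) = ⟨i, (a', b)⟩ then x a' else 0)
          = ∑ a', if a' = a then x a' else 0 := by
            refine Finset.sum_congr rfl fun a' _ => ?_
            congr 1
            simp [Sigma.mk.inj_iff, Prod.ext_iff, eq_comm]
        _ = x a := by simp
    have hzne : ∀ b, z b ≠ 0 := by
      intro b h
      exact ha₀ (by rw [← hzval b a₀, h]; simp)
    have hmv : ∀ (b : k i) q, (ρ *ᵥ z b) q = ∑ a', ρ q ⟨i, (a', b)⟩ * x a' := by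
      intro b q
      simp only [Matrix.mulVec, dotProduct, hz, Finset.mul_sum, mul_ite, mul_zero]
      rw [Finset.sum_comm]
      refine Finset.sum_congr rfl fun a' _ => ?_
      rw [Finset.sum_ite_eq' Finset.univ (⟨i, (a', b)⟩ : Σ j, (m j × k j))
        (fun q' => ρ q q' * x a')]
      simp
    have hquad : ∀ b : k i, star (z b) ⬝ᵥ (ρ *ᵥ z b)
        = ∑ a, ∑ a', star (x a) * (ρ ⟨i, (a, b)⟩ ⟨i, (a', b)⟩ * x a') := by
      intro b
      simp only [dotProduct, Pi.star_apply, hz, star_sum, apply_ite star, star_zero,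
        Finset.sum_mul, ite_mul, zero_mul]
      rw [Finset.sum_comm]
      refine Finset.sum_congr rfl fun a _ => ?_
      rw [Finset.sum_ite_eq' Finset.univ (⟨i, (a, b)⟩ : Σ j, (m j × k j))
        (fun q => star (x a) * (ρ *ᵥ z b) q)]
      simp only [Finset.mem_univ, if_true]
      rw [hmv b]
      rw [Finset.mul_sum]
    set F : k i → m i → m i → ℂ :=
      fun b a a' => star (x a) * (ρ ⟨i, (a, b)⟩ ⟨i, (a', b)⟩ * x a') with hF
    have h1 : ∀ a : m i, (∑ a', ∑ b, F b a a') = ∑ b, ∑ a', F b a a' :=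
      fun a => Finset.sum_comm
    have h2 : (∑ a, ∑ b, ∑ a', F b a a') = ∑ b, ∑ a, ∑ a', F b a a' := Finset.sum_comm
    have hsum : star x ⬝ᵥ (Rmat ρ i *ᵥ x)
        = ∑ b, ∑ a, ∑ a', star (x a) * (ρ ⟨i, (a, b)⟩ ⟨i, (a', b)⟩ * x a') := by
      calc star x ⬝ᵥ (Rmat ρ i *ᵥ x)
          = ∑ a, ∑ a', ∑ b, F b a a' := by
            simp only [Matrix.mulVec, dotProduct, Rmat, Matrix.of_apply, Pi.star_apply,
              Finset.sum_mul, Finset.mul_sum, hF]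
        _ = ∑ a, ∑ b, ∑ a', F b a a' := Finset.sum_congr rfl fun a _ => h1 a
        _ = ∑ b, ∑ a, ∑ a', F b a a' := h2
    rw [hsum]
    refine Finset.sum_pos (fun b _ => ?_) Finset.univ_nonempty
    rw [← hquad b]
    exact hρ.dotProduct_mulVec_pos (hzne b)

lemma trace_Rmat_sum (X : ∀ i, Matrix (m i) (m i) ℂ) :
    Matrix.trace (ρ * Matrix.blockDiagonal' (fun i => X i ⊗ₖ (1 : Matrix (k i) (k i) ℂ)))
      = ∑ i, Matrix.trace (Rmat ρ i * X i) := by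
  rw [Matrix.trace]
  simp only [Matrix.diag_apply, Matrix.mul_apply]
  rw [← Finset.univ_sigma_univ, Finset.sum_sigma]
  refine Finset.sum_congr rfl fun i _ => ?_
  rw [Fintype.sum_prod_type]
  have inner : ∀ (a : m i) (b : k i),
      (∑ q : Σ j, (m j × k j), ρ ⟨i, (a, b)⟩ q
          * Matrix.blockDiagonal' (fun j => X j ⊗ₖ (1 : Matrix (k j) (k j) ℂ)) q ⟨i, (a, b)⟩)
        = ∑ a', ρ ⟨i, (a, b)⟩ ⟨i, (a', b)⟩ * X i a' a := by
    intro a b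
    rw [← Finset.univ_sigma_univ, Finset.sum_sigma]
    rw [Finset.sum_eq_single_of_mem i (Finset.mem_univ i) (fun j _ hj =>
      Finset.sum_eq_zero fun p _ => by
        rw [Matrix.blockDiagonal'_apply_ne _ _ _ hj, mul_zero])]
    rw [Fintype.sum_prod_type]
    refine Finset.sum_congr rfl fun a' _ => ?_
    simp only [Matrix.blockDiagonal'_apply_eq, Matrix.kroneckerMap_apply, Matrix.one_apply,
      mul_ite, mul_one, mul_zero]
    rw [Finset.sum_ite_eq' Finset.univ b
      (fun b' => ρ ⟨i, (a, b)⟩ ⟨i, (a', b')⟩ * X i a' a)]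
    simp
  calc (∑ a, ∑ b, ∑ q : Σ j, (m j × k j), ρ ⟨i, (a, b)⟩ q
          * Matrix.blockDiagonal' (fun j => X j ⊗ₖ (1 : Matrix (k j) (k j) ℂ)) q ⟨i, (a, b)⟩)
      = ∑ a, ∑ b, ∑ a', ρ ⟨i, (a, b)⟩ ⟨i, (a', b)⟩ * X i a' a :=
        Finset.sum_congr rfl fun a _ => Finset.sum_congr rfl fun b _ => inner a b
    _ = ∑ a, ∑ a', ∑ b, ρ ⟨i, (a, b)⟩ ⟨i, (a', b)⟩ * X i a' a :=
        Finset.sum_congr rfl fun a _ => Finset.sum_comm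
    _ = Matrix.trace (Rmat ρ i * X i) := by
        rw [Matrix.trace]
        simp only [Matrix.diag_apply, Matrix.mul_apply, Rmat, Matrix.of_apply, Finset.sum_mul]

lemma trace_dec_sum (τ : ∀ i, Matrix (k i) (k i) ℂ) (hτtr : ∀ i, Matrix.trace (τ i) = 1)
    (X : ∀ i, Matrix (m i) (m i) ℂ) :
    Matrix.trace (Matrix.blockDiagonal' (fun i => Rmat ρ i ⊗ₖ τ i)
        * Matrix.blockDiagonal' (fun i => X i ⊗ₖ (1 : Matrix (k i) (k i) ℂ)))
      = ∑ i, Matrix.trace (Rmat ρ i * X i) := by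
  rw [← Matrix.blockDiagonal'_mul, Matrix.trace_blockDiagonal']
  refine Finset.sum_congr rfl fun i _ => ?_
  rw [← Matrix.mul_kronecker_mul, Matrix.trace_kronecker, mul_one, hτtr, mul_one]

end Main

end RelEntAux

/-- **Lemma 2.9.** The decoherence-free relative entropy decomposes as
`D(ρ‖ρ_N) = D(ρ‖σ_Tr) − D(ρ_N‖σ_Tr)`. -/
theorem relEnt_decohered_decomposition
    {ι : Type*} [Fintype ι] [DecidableEq ι]
    {m k : ι → Type*} [∀ i, Fintype (m i)] [∀ i, Fintype (k i)]
    [∀ i, Nonempty (m i)] [∀ i, Nonempty (k i)]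
    [∀ i, DecidableEq (m i)] [∀ i, DecidableEq (k i)]
    (τ : ∀ i, Matrix (k i) (k i) ℂ)
    (hτ : ∀ i, (τ i).PosDef) (hτtr : ∀ i, Matrix.trace (τ i) = 1)
    (ρ : Matrix (Σ i, (m i × k i)) (Σ i, (m i × k i)) ℂ)
    (hρ : ρ.PosDef) (hρtr : Matrix.trace ρ = 1) :
    ((decohered τ ρ).PosDef ∧ Matrix.trace (decohered τ ρ) = 1) ∧
    ((sigmaTr τ : Matrix (Σ i, (m i × k i)) (Σ i, (m i × k i)) ℂ).PosDef ∧
      Matrix.trace (sigmaTr τ : Matrix (Σ i, (m i × k i)) (Σ i, (m i × k i)) ℂ) = 1) ∧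
    relEnt ρ (decohered τ ρ) = relEnt ρ (sigmaTr τ) - relEnt (decohered τ ρ) (sigmaTr τ) := by
  classical
  open RelEntAux in
  rcases isEmpty_or_nonempty ι with hι | hι
  · have : IsEmpty (Σ i, (m i × k i)) := ⟨fun q => IsEmpty.false q.1⟩
    exact absurd hρtr (by simp [Matrix.trace])
  · have hRpd : ∀ i, (Rmat ρ i).PosDef := Rmat_posDef ρ hρ
    have hdec_eq : decohered τ ρ = Matrix.blockDiagonal' (fun i => Rmat ρ i ⊗ₖ τ i) := rfl
    have hblkpd : ∀ i, (Rmat ρ i ⊗ₖ τ i).PosDef := fun i => posDef_kronecker (hRpd i) (hτ i)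
    have hdec_pd : (decohered τ ρ).PosDef := by
      rw [hdec_eq]; exact posDef_blockDiagonal' hblkpd
    have hdec_tr : Matrix.trace (decohered τ ρ) = 1 := by
      rw [hdec_eq, Matrix.trace_blockDiagonal']
      calc ∑ i, Matrix.trace (Rmat ρ i ⊗ₖ τ i) = ∑ i, Matrix.trace (Rmat ρ i) := by
            refine Finset.sum_congr rfl fun i _ => ?_
            rw [Matrix.trace_kronecker, hτtr, mul_one]
        _ = Matrix.trace ρ := by
            rw [show Matrix.trace ρ = ∑ q : Σ i, (m i × k i), ρ q q from rfl]
            rw [← Finset.univ_sigma_univ, Finset.sum_sigma]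
            refine Finset.sum_congr rfl fun i _ => ?_
            rw [Fintype.sum_prod_type, Matrix.trace]
            exact Finset.sum_congr rfl fun a _ => rfl
        _ = 1 := hρtr
    set d : ℝ := (Fintype.card (Σ i, (m i × k i)) : ℝ) with hd_def
    have hdpos : 0 < d := by
      have : Nonempty (Σ i, (m i × k i)) :=
        ⟨⟨Classical.arbitrary ι, ⟨Classical.arbitrary _, Classical.arbitrary _⟩⟩⟩
      rw [hd_def]
      exact_mod_cast Fintype.card_pos
    have hcpos : ∀ i, 0 < (Fintype.card (k i) : ℝ) / d :=
      fun i => div_pos (by exact_mod_cast Fintype.card_pos) hdpos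
    have hσ_eq : (sigmaTr τ : Matrix (Σ i, (m i × k i)) (Σ i, (m i × k i)) ℂ)
        = Matrix.blockDiagonal'
          (fun i => (((Fintype.card (k i) : ℝ) / d) • (1 : Matrix (m i) (m i) ℂ)) ⊗ₖ τ i) := by
      unfold sigmaTr
      rw [← hd_def]
      exact congrArg _ (funext fun i => (Matrix.smul_kronecker _ _ _).symm)
    have hσblk_pd : ∀ i,
        ((((Fintype.card (k i) : ℝ) / d) • (1 : Matrix (m i) (m i) ℂ)) ⊗ₖ τ i).PosDef :=
      fun i => posDef_kronecker (posDef_real_smul_one (hcpos i)) (hτ i)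
    have hσ_pd : (sigmaTr τ : Matrix (Σ i, (m i × k i)) (Σ i, (m i × k i)) ℂ).PosDef := by
      rw [hσ_eq]; exact posDef_blockDiagonal' hσblk_pd
    have hσ_tr : Matrix.trace (sigmaTr τ : Matrix (Σ i, (m i × k i)) (Σ i, (m i × k i)) ℂ) = 1 := by
      rw [hσ_eq, Matrix.trace_blockDiagonal']
      have hterm : ∀ i, Matrix.trace
            ((((Fintype.card (k i) : ℝ) / d) • (1 : Matrix (m i) (m i) ℂ)) ⊗ₖ τ i)
          = (((Fintype.card (k i) : ℝ) / d * (Fintype.card (m i) : ℝ) : ℝ) : ℂ) := by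
        intro i
        rw [Matrix.trace_kronecker, hτtr, mul_one, Matrix.trace_smul, Matrix.trace_one]
        rw [Complex.real_smul]
        push_cast
        ring
      rw [Finset.sum_congr rfl fun i _ => hterm i, ← Complex.ofReal_sum]
      have hsum1 : ∑ i, (Fintype.card (k i) : ℝ) / d * (Fintype.card (m i) : ℝ) = 1 := by
        have hd_eq : d = ∑ i, (Fintype.card (k i) : ℝ) * (Fintype.card (m i) : ℝ) := by
          rw [hd_def, Fintype.card_sigma]
          push_cast
          exact Finset.sum_congr rfl fun i _ => by rw [Fintype.card_prod]; push_cast; ring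
        calc ∑ i, (Fintype.card (k i) : ℝ) / d * (Fintype.card (m i) : ℝ)
            = (∑ i, (Fintype.card (k i) : ℝ) * (Fintype.card (m i) : ℝ)) / d := by
              rw [Finset.sum_div]
              exact Finset.sum_congr rfl fun i _ => by ring
          _ = 1 := by rw [← hd_eq]; exact div_self (ne_of_gt hdpos)
      rw [hsum1, Complex.ofReal_one]
    have hρN_log : mlog (decohered τ ρ) = Matrix.blockDiagonal'
        (fun i => mlog (Rmat ρ i) ⊗ₖ (1 : Matrix (k i) (k i) ℂ)
          + (1 : Matrix (m i) (m i) ℂ) ⊗ₖ mlog (τ i)) := by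
      rw [hdec_eq, mlog_blockDiagonal' (fun i => (hblkpd i).1)]
      exact congrArg _ (funext fun i => mlog_kronecker (hRpd i) (hτ i))
    have hσ_log : mlog (sigmaTr τ : Matrix (Σ i, (m i × k i)) (Σ i, (m i × k i)) ℂ)
        = Matrix.blockDiagonal'
          (fun i => Matrix.diagonal (fun _ : m i =>
              (Real.log ((Fintype.card (k i) : ℝ) / d) : ℂ)) ⊗ₖ (1 : Matrix (k i) (k i) ℂ)
            + (1 : Matrix (m i) (m i) ℂ) ⊗ₖ mlog (τ i)) := by
      rw [hσ_eq, mlog_blockDiagonal' (fun i => (hσblk_pd i).1)]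
      refine congrArg _ (funext fun i => ?_)
      rw [mlog_kronecker (posDef_real_smul_one (hcpos i)) (hτ i), mlog_real_smul_one]
    have hdiff : mlog (decohered τ ρ)
          - mlog (sigmaTr τ : Matrix (Σ i, (m i × k i)) (Σ i, (m i × k i)) ℂ)
        = Matrix.blockDiagonal' (fun i =>
            (mlog (Rmat ρ i) - Matrix.diagonal (fun _ : m i =>
              (Real.log ((Fintype.card (k i) : ℝ) / d) : ℂ))) ⊗ₖ (1 : Matrix (k i) (k i) ℂ)) := by
      rw [hρN_log, hσ_log, ← Matrix.blockDiagonal'_sub]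
      refine congrArg _ (funext fun i => ?_)
      simp only [Pi.sub_apply]
      rw [sub_kron]
      abel
    have hkey : Matrix.trace (ρ * (mlog (decohered τ ρ)
            - mlog (sigmaTr τ : Matrix (Σ i, (m i × k i)) (Σ i, (m i × k i)) ℂ)))
        = Matrix.trace (decohered τ ρ * (mlog (decohered τ ρ)
            - mlog (sigmaTr τ : Matrix (Σ i, (m i × k i)) (Σ i, (m i × k i)) ℂ))) := by
      rw [hdiff, trace_Rmat_sum, hdec_eq, trace_dec_sum ρ τ hτtr]
    refine ⟨⟨hdec_pd, hdec_tr⟩, ⟨hσ_pd, hσ_tr⟩, ?_⟩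
    have hsplit : ρ * (mlog ρ - mlog (decohered τ ρ))
        = ρ * (mlog ρ - mlog (sigmaTr τ : Matrix (Σ i, (m i × k i)) (Σ i, (m i × k i)) ℂ))
          - ρ * (mlog (decohered τ ρ)
            - mlog (sigmaTr τ : Matrix (Σ i, (m i × k i)) (Σ i, (m i × k i)) ℂ)) := by
      rw [← mul_sub]
      congr 1
      abel
    simp only [relEnt]
    rw [hsplit, Matrix.trace_sub, hkey, Complex.sub_re]
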